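/- For every multi-index α ∈ ℕ^d, the d-dimensional Hermite function 𝓗_α is an eigenfunction of the Hermite operator D = −Δ + |x|² with eigenvalue 2|α| + d, i.e., (−Δ + |x|²)𝓗_α = (2|α| + d)𝓗_α. -/

import Mathlib

open Real MeasureTheory Finset

/-- The physicists' Hermite polynomial `H_n(t) = (-1)^n e^{t^2} (d/dt)^n e^{-t^2}`. -/
noncomputable def hermiteH (n : ℕ) (t : ℝ) : ℝ :=
  (-1 : ℝ) ^ n * Real.exp (t ^ 2) * iteratedDeriv n (fun s => Real.exp (-s ^ 2)) t

/-- The `L^2`-normalized Hermite function `h_n(t) = (2^n n! √π)^{-1/2} H_n(t) e^{-t^2/2}`. -/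
noncomputable def hermiteh (n : ℕ) (t : ℝ) : ℝ :=
  (Real.sqrt (2 ^ n * n.factorial * Real.sqrt Real.pi))⁻¹ * hermiteH n t * Real.exp (-t ^ 2 / 2)

/-- The `d`-dimensional Hermite function `𝓗_α(x) = h_{α₁}(x₁)⋯h_{α_d}(x_d)`. -/
noncomputable def hermiteHd (d : ℕ) (α : Fin d → ℕ) (x : Fin d → ℝ) : ℝ :=
  ∏ j, hermiteh (α j) (x j)

open Polynomial in
lemma derivative_hermite_succ (n : ℕ) :
    derivative (hermite (n + 1)) = ((n : ℤ[X]) + 1) * hermite n := by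
  induction n with
  | zero => simp [hermite_one, hermite_zero]
  | succ m ih =>
    rw [hermite_succ (m + 1), derivative_sub, derivative_mul, derivative_X, one_mul, ih,
      derivative_mul]
    rw [hermite_succ m]
    push_cast
    simp only [derivative_add, derivative_natCast, derivative_one]
    ring

open Polynomial in
lemma hermite_identity (n : ℕ) (y : ℝ) :
    y * aeval y (derivative (hermite n)) - aeval y (derivative (derivative (hermite n)))
      = n * aeval y (hermite n) := by
  cases n with
  | zero => simp [hermite_zero]
  | succ m =>
    rw [derivative_hermite_succ, derivative_mul]
    simp only [derivative_add, derivative_natCast, derivative_one, add_zero, zero_mul, zero_add]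
    rw [hermite_succ m]
    simp only [map_mul, map_add, map_sub, map_one, map_natCast, aeval_X]
    push_cast
    ring

/-- Auxiliary: the (unnormalized) Hermite function built from a polynomial. -/
noncomputable def Psi (p : Polynomial ℤ) (t : ℝ) : ℝ :=
  (Polynomial.aeval (Real.sqrt 2 * t) p) * Real.exp (-t ^ 2 / 2)

lemma gauss_hasDerivAt (t : ℝ) :
    HasDerivAt (fun s : ℝ => Real.exp (-s ^ 2 / 2)) (-t * Real.exp (-t ^ 2 / 2)) t := by
  have h : HasDerivAt (fun s : ℝ => -s ^ 2 / 2) (-t) t := by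
    have : HasDerivAt (fun s : ℝ => -s ^ 2 / 2) (-(((2 : ℕ) : ℝ) * t ^ (2 - 1)) / 2) t :=
      (hasDerivAt_pow 2 t).neg.div_const 2
    convert this using 1
    norm_num
    ring
  simpa [mul_comm] using h.exp

lemma Psi_hasDerivAt (p : Polynomial ℤ) (t : ℝ) :
    HasDerivAt (Psi p) (Real.sqrt 2 * Psi (Polynomial.derivative p) t - t * Psi p t) t := by
  have h1 : HasDerivAt (fun s : ℝ => (Polynomial.aeval (Real.sqrt 2 * s) p : ℝ))
      (Polynomial.aeval (Real.sqrt 2 * t) (Polynomial.derivative p) * Real.sqrt 2) t := by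
    have hp := Polynomial.hasDerivAt_aeval (𝕜 := ℝ) (q := p) (Real.sqrt 2 * t)
    have hl : HasDerivAt (fun s : ℝ => Real.sqrt 2 * s) (Real.sqrt 2) t := by
      simpa using (hasDerivAt_id t).const_mul (Real.sqrt 2)
    simpa [Function.comp_def] using hp.comp t hl
  have h := h1.mul (gauss_hasDerivAt t)
  have : HasDerivAt (Psi p)
      (Polynomial.aeval (Real.sqrt 2 * t) (Polynomial.derivative p) * Real.sqrt 2
        * Real.exp (-t ^ 2 / 2)
        + Polynomial.aeval (Real.sqrt 2 * t) p * (-t * Real.exp (-t ^ 2 / 2))) t := h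
  convert this using 1
  unfold Psi
  ring

lemma Psi_deriv (p : Polynomial ℤ) :
    deriv (Psi p) = fun t => Real.sqrt 2 * Psi (Polynomial.derivative p) t - t * Psi p t :=
  funext fun t => (Psi_hasDerivAt p t).deriv

lemma iteratedDeriv_two_eq (f : ℝ → ℝ) : iteratedDeriv 2 f = deriv (deriv f) := by
  rw [iteratedDeriv_succ, iteratedDeriv_one]

lemma Psi_iteratedDeriv_two (p : Polynomial ℤ) (t : ℝ) :
    iteratedDeriv 2 (Psi p) t =
      2 * Psi (Polynomial.derivative (Polynomial.derivative p)) t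
        - 2 * Real.sqrt 2 * t * Psi (Polynomial.derivative p) t
        - Psi p t + t ^ 2 * Psi p t := by
  rw [iteratedDeriv_two_eq, Psi_deriv]
  have h : HasDerivAt (fun t : ℝ => Real.sqrt 2 * Psi (Polynomial.derivative p) t - t * Psi p t)
      (Real.sqrt 2 * (Real.sqrt 2 * Psi (Polynomial.derivative (Polynomial.derivative p)) t
          - t * Psi (Polynomial.derivative p) t)
        - (1 * Psi p t + t * (Real.sqrt 2 * Psi (Polynomial.derivative p) t - t * Psi p t))) t :=
    ((Psi_hasDerivAt (Polynomial.derivative p) t).const_mul (Real.sqrt 2)).sub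
      ((hasDerivAt_id t).mul (Psi_hasDerivAt p t))
  rw [h.deriv]
  have h2 : Real.sqrt 2 * Real.sqrt 2 = 2 := Real.mul_self_sqrt (by norm_num)
  linear_combination (Psi (Polynomial.derivative (Polynomial.derivative p)) t) * h2

lemma Psi_hermite_second (n : ℕ) (t : ℝ) :
    iteratedDeriv 2 (Psi (Polynomial.hermite n)) t
      = (t ^ 2 - (2 * n + 1)) * Psi (Polynomial.hermite n) t := by
  rw [Psi_iteratedDeriv_two]
  have hid := hermite_identity n (Real.sqrt 2 * t)
  unfold Psi
  linear_combination (-2 * Real.exp (-t ^ 2 / 2)) * hid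

lemma hermiteH_eq (n : ℕ) (t : ℝ) :
    hermiteH n t = Real.sqrt 2 ^ n * Polynomial.aeval (Real.sqrt 2 * t) (Polynomial.hermite n) := by
  have hf : ContDiff ℝ n (fun y : ℝ => Real.exp (-(y ^ 2 / 2))) := by
    apply Real.contDiff_exp.comp
    exact ((contDiff_id.pow 2).div_const 2).neg
  have hcomp : (fun s : ℝ => Real.exp (-s ^ 2))
      = fun s => (fun y : ℝ => Real.exp (-(y ^ 2 / 2))) (Real.sqrt 2 * s) := by
    funext s
    show Real.exp (-s ^ 2) = Real.exp (-((Real.sqrt 2 * s) ^ 2 / 2))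
    rw [mul_pow, Real.sq_sqrt (by norm_num : (0:ℝ) ≤ 2)]
    congr 1
    ring
  unfold hermiteH
  rw [hcomp, iteratedDeriv_comp_const_mul hf]
  simp only [iteratedDeriv_eq_iterate, Polynomial.deriv_gaussian_eq_hermite_mul_gaussian]
  have he : Real.exp (-((Real.sqrt 2 * t) ^ 2 / 2)) = Real.exp (-t ^ 2) := by
    rw [mul_pow, Real.sq_sqrt (by norm_num : (0:ℝ) ≤ 2)]
    congr 1
    ring
  rw [he]
  have hee : Real.exp (t ^ 2) * Real.exp (-t ^ 2) = 1 := by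
    rw [← Real.exp_add]; simp
  have hsign : ((-1 : ℝ) ^ n) * ((-1 : ℝ) ^ n) = 1 := by
    rw [← pow_add]
    exact (neg_one_pow_eq_one_iff_even (by norm_num)).mpr (Even.add_self n)
  set A := (Polynomial.aeval (Real.sqrt 2 * t) (Polynomial.hermite n) : ℝ) with hA
  linear_combination (Real.sqrt 2 ^ n * A * ((-1 : ℝ) ^ n * (-1 : ℝ) ^ n)) * hee
    + (Real.sqrt 2 ^ n * A) * hsign

lemma hermiteh_eq_Psi (n : ℕ) :
    (fun t => hermiteh n t)
      = fun t => ((Real.sqrt (2 ^ n * n.factorial * Real.sqrt Real.pi))⁻¹ * Real.sqrt 2 ^ n)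
          * Psi (Polynomial.hermite n) t := by
  funext t
  unfold hermiteh Psi
  rw [hermiteH_eq]
  ring

lemma iteratedDeriv_two_const_mul (k : ℝ) (g : ℝ → ℝ) (t : ℝ) :
    iteratedDeriv 2 (fun s => k * g s) t = k * iteratedDeriv 2 g t := by
  rw [iteratedDeriv_two_eq, iteratedDeriv_two_eq]
  have h : deriv (fun s => k * g s) = fun s => k * deriv g s :=
    funext fun s => deriv_const_mul_field k
  rw [h]
  exact deriv_const_mul_field k

lemma hermiteh_second (n : ℕ) (t : ℝ) :
    iteratedDeriv 2 (fun s => hermiteh n s) t = (t ^ 2 - (2 * n + 1)) * hermiteh n t := by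
  rw [hermiteh_eq_Psi n, iteratedDeriv_two_const_mul, Psi_hermite_second]
  have := congrFun (hermiteh_eq_Psi n) t
  rw [this]
  ring

/-- The Hermite functions are eigenfunctions of the Hermite operator
`D = -Δ + |x|²` with eigenvalue `2|α| + d`. -/
theorem hermiteHd_eigenfunction (d : ℕ) (α : Fin d → ℕ) (x : Fin d → ℝ) :
    -(∑ j, iteratedDeriv 2 (fun s => hermiteHd d α (Function.update x j s)) (x j))
      + (∑ j, (x j) ^ 2) * hermiteHd d α x
      = (2 * (∑ j, (α j : ℝ)) + d) * hermiteHd d α x := by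
  have key : ∀ j, iteratedDeriv 2 (fun s => hermiteHd d α (Function.update x j s)) (x j)
      = ((x j) ^ 2 - (2 * (α j) + 1)) * hermiteHd d α x := by
    intro j
    have hupd : (fun s => hermiteHd d α (Function.update x j s))
        = fun s => (∏ i ∈ univ.erase j, hermiteh (α i) (x i)) * hermiteh (α j) s := by
      funext s
      unfold hermiteHd
      rw [← Finset.prod_erase_mul _ _ (mem_univ j)]
      congr 1
      · exact Finset.prod_congr rfl fun i hi => by
          rw [Function.update_of_ne (mem_erase.mp hi).1]
      · rw [Function.update_self]
    rw [hupd, iteratedDeriv_two_const_mul, hermiteh_second]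
    unfold hermiteHd
    rw [← Finset.prod_erase_mul _ _ (mem_univ j)]
    ring
  simp only [key]
  rw [← Finset.sum_mul]
  have hsum : ∑ j, ((x j) ^ 2 - (2 * (α j : ℝ) + 1))
      = (∑ j, (x j) ^ 2) - (2 * (∑ j, (α j : ℝ)) + d) := by
    rw [Finset.sum_sub_distrib, Finset.sum_add_distrib, ← Finset.mul_sum, Finset.sum_const,
      card_univ, Fintype.card_fin, nsmul_eq_mul, mul_one]
  rw [hsum]
  ring
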